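/- Two-player turn-based parity games are positionally determined: from every state of the game, exactly one of the two players has a memoryless winning strategy. -/

import Mathlib

/-- A two-player turn-based parity game: states partitioned between Player 0
(`owner v = false`) and Player 1 (`owner v = true`), an edge relation and a
priority function. -/
structure ParityGame where
  V : Type
  owner : V → Bool
  R : V → V → Prop
  ω : V → ℕ

namespace ParityGame

/-- A strategy for player `b`: from any history and any current state owned by
`b` that has a successor, it selects a successor. -/
structure Strategy (G : ParityGame) (b : Bool) where
  next : List G.V → G.V → G.V
  valid : ∀ h v, G.owner v = b → (∃ w, G.R v w) → G.R v (next h v)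

/-- A strategy is memoryless if it only depends on the current state. -/
def Strategy.Memoryless {G : ParityGame} {b : Bool} (σ : G.Strategy b) : Prop :=
  ∀ h h' v, σ.next h v = σ.next h' v

/-- The history (list of previously visited states) of a play after `n` steps. -/
def hist (G : ParityGame) (p : ℕ → Option G.V) (n : ℕ) : List G.V :=
  (List.range n).filterMap p

/-- `p` is a maximal play from `y` in which player `b` follows strategy `σ`
(plays are encoded as `ℕ → Option G.V`, with `none` after a finite play ends;
a play ends exactly in states with no outgoing edge). -/
def IsPlayFor (G : ParityGame) (b : Bool) (σ : G.Strategy b) (y : G.V)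
    (p : ℕ → Option G.V) : Prop :=
  p 0 = some y ∧
  (∀ n v, p n = some v → (p (n + 1) = none ↔ ¬ ∃ w, G.R v w)) ∧
  (∀ n, p n = none → p (n + 1) = none) ∧
  (∀ n v w, p n = some v → p (n + 1) = some w → G.R v w) ∧
  (∀ n v w, p n = some v → p (n + 1) = some w → G.owner v = b →
    w = σ.next (G.hist p n) v)

/-- The maximal play `p` is winning for player `b`: if it is finite, its last
state belongs to the opponent (the blocked player loses); if it is infinite,
the least priority occurring infinitely often is even iff `b` is Player 0. -/
def WinsPlay (G : ParityGame) (b : Bool) (p : ℕ → Option G.V) : Prop :=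
  (∀ n v, p n = some v → p (n + 1) = none → G.owner v ≠ b) ∧
  ((∀ n, (p n).isSome) →
    (Even (sInf {c | {n | ∃ v, p n = some v ∧ G.ω v = c}.Infinite}) ↔ b = false))

/-- `σ` is winning for player `b` from `y`: every maximal play from `y`
compatible with `σ` is winning for `b`. -/
def WinningFrom (G : ParityGame) (b : Bool) (σ : G.Strategy b) (y : G.V) : Prop :=
  ∀ p : ℕ → Option G.V, G.IsPlayFor b σ y p → G.WinsPlay b p

end ParityGame

namespace PDP
noncomputable section
attribute [local instance] Classical.propDecidable

/-- strict lexicographic order on ordinal-valued tuples along a list of coordinates -/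
def sLt : List ℕ → (ℕ → Ordinal) → (ℕ → Ordinal) → Prop
  | [], _, _ => False
  | q :: L, t, s => t q < s q ∨ (t q = s q ∧ sLt L t s)

def eqOn (L : List ℕ) (t s : ℕ → Ordinal) : Prop := ∀ q ∈ L, t q = s q

def sLe (L : List ℕ) (t s : ℕ → Ordinal) : Prop := sLt L t s ∨ eqOn L t s

theorem eqOn_refl (L : List ℕ) (t : ℕ → Ordinal) : eqOn L t t := fun _ _ => rfl

theorem sLe_refl (L : List ℕ) (t : ℕ → Ordinal) : sLe L t t := Or.inr (eqOn_refl L t)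

theorem eqOn_trans {L t s r} (h1 : eqOn L t s) (h2 : eqOn L s r) : eqOn L t r :=
  fun q hq => (h1 q hq).trans (h2 q hq)

theorem sLe_cons {q L t s} :
    sLe (q :: L) t s ↔ (t q < s q ∨ (t q = s q ∧ sLe L t s)) := by
  constructor
  · rintro (h | h)
    · rcases h with h | ⟨he, h⟩
      · exact Or.inl h
      · exact Or.inr ⟨he, Or.inl h⟩
    · exact Or.inr ⟨h q (List.mem_cons_self), Or.inr fun r hr => h r (List.mem_cons_of_mem _ hr)⟩
  · rintro (h | ⟨he, h | h⟩)
    · exact Or.inl (Or.inl h)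
    · exact Or.inl (Or.inr ⟨he, h⟩)
    · exact Or.inr fun r hr => by
        rcases List.mem_cons.1 hr with rfl | hr
        · exact he
        · exact h r hr

theorem sLt_trichot : ∀ (L : List ℕ) (t s), sLt L t s ∨ eqOn L t s ∨ sLt L s t
  | [], t, s => Or.inr (Or.inl (fun q hq => absurd hq List.not_mem_nil))
  | q :: L, t, s => by
    rcases lt_trichotomy (t q) (s q) with h | h | h
    · exact Or.inl (Or.inl h)
    · rcases sLt_trichot L t s with h' | h' | h'
      · exact Or.inl (Or.inr ⟨h, h'⟩)
      · refine Or.inr (Or.inl fun r hr => ?_)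
        rcases List.mem_cons.1 hr with rfl | hr
        · exact h
        · exact h' r hr
      · exact Or.inr (Or.inr (Or.inr ⟨h.symm, h'⟩))
    · exact Or.inr (Or.inr (Or.inl h))

theorem sLt_trans : ∀ {L : List ℕ} {t s r}, sLt L t s → sLt L s r → sLt L t r
  | [], _, _, _, h, _ => h.elim
  | q :: L, t, s, r, h1, h2 => by
    rcases h1 with h1 | ⟨e1, h1⟩ <;> rcases h2 with h2 | ⟨e2, h2⟩
    · exact Or.inl (h1.trans h2)
    · exact Or.inl (e2 ▸ h1)
    · exact Or.inl (e1 ▸ h2)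
    · exact Or.inr ⟨e1.trans e2, sLt_trans h1 h2⟩

theorem sLt_of_eqOn_sLt : ∀ {L : List ℕ} {t s r}, eqOn L t s → sLt L s r → sLt L t r
  | [], _, _, _, _, h => h.elim
  | q :: L, t, s, r, he, h => by
    have hq : t q = s q := he q (List.mem_cons_self)
    have he' : eqOn L t s := fun x hx => he x (List.mem_cons_of_mem _ hx)
    rcases h with h | ⟨e, h⟩
    · exact Or.inl (hq ▸ h)
    · exact Or.inr ⟨hq.trans e, sLt_of_eqOn_sLt he' h⟩

theorem sLt_of_sLt_eqOn : ∀ {L : List ℕ} {t s r}, sLt L t s → eqOn L s r → sLt L t r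
  | [], _, _, _, h, _ => h.elim
  | q :: L, t, s, r, h, he => by
    have hq : s q = r q := he q (List.mem_cons_self)
    have he' : eqOn L s r := fun x hx => he x (List.mem_cons_of_mem _ hx)
    rcases h with h | ⟨e, h⟩
    · exact Or.inl (hq ▸ h)
    · exact Or.inr ⟨e.trans hq, sLt_of_sLt_eqOn h he'⟩

theorem sLt_of_sLt_sLe {L : List ℕ} {t s r} (h1 : sLt L t s) (h2 : sLe L s r) : sLt L t r := by
  rcases h2 with h2 | h2
  · exact sLt_trans h1 h2
  · exact sLt_of_sLt_eqOn h1 h2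

theorem sLt_of_sLe_sLt {L : List ℕ} {t s r} (h1 : sLe L t s) (h2 : sLt L s r) : sLt L t r := by
  rcases h1 with h1 | h1
  · exact sLt_trans h1 h2
  · exact sLt_of_eqOn_sLt h1 h2

theorem sLe_trans {L : List ℕ} {t s r} (h1 : sLe L t s) (h2 : sLe L s r) : sLe L t r := by
  rcases h1 with h1 | h1
  · exact Or.inl (sLt_of_sLt_sLe h1 h2)
  · rcases h2 with h2 | h2
    · exact Or.inl (sLt_of_eqOn_sLt h1 h2)
    · exact Or.inr (eqOn_trans h1 h2)

theorem sLt_wf : ∀ L : List ℕ, WellFounded (sLt L)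
  | [] => ⟨fun a => Acc.intro a fun _ h => h.elim⟩
  | q :: L => by
    have h1 : WellFounded (Prod.Lex ((· < ·) : Ordinal → Ordinal → Prop) (sLt L)) :=
      WellFounded.prod_lex wellFounded_lt (sLt_wf L)
    have h2 : WellFounded (InvImage (Prod.Lex ((· < ·) : Ordinal → Ordinal → Prop) (sLt L))
        (fun t : ℕ → Ordinal => (t q, t))) := InvImage.wf _ h1
    refine Subrelation.wf (fun {t s} h => ?_) h2
    rcases h with h | ⟨he, h⟩
    · exact Prod.Lex.left _ _ h
    · show Prod.Lex _ _ (t q, t) (s q, s)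
      rw [he]
      exact Prod.Lex.right _ h

/-- restriction of a lex comparison to a downward filter of a sorted coordinate list -/
theorem sLe_filter {f : ℕ → Bool} (hf : ∀ a b, a ≤ b → f b = true → f a = true) :
    ∀ {L : List ℕ}, L.Pairwise (· < ·) → ∀ {t s}, sLe L t s → sLe (L.filter f) t s := by
  intro L
  induction L with
  | nil => intro _ _ _ _; exact Or.inr fun q hq => absurd hq (by simp)
  | cons q L ih =>
    intro hs t s h
    have hs' : L.Pairwise (· < ·) := (List.pairwise_cons.1 hs).2
    have hlt : ∀ r ∈ L, q < r := (List.pairwise_cons.1 hs).1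
    rcases sLe_cons.1 h with h | ⟨he, h⟩
    · by_cases hq : f q = true
      · rw [List.filter_cons_of_pos hq]
        exact Or.inl (Or.inl h)
      · have : (q :: L).filter f = [] := by
          rw [List.filter_eq_nil_iff]
          intro a ha
          rcases List.mem_cons.1 ha with rfl | ha
          · simpa using hq
          · intro hfa
            exact hq (hf q a (hlt a ha).le (by simpa using hfa))
        rw [this]
        exact Or.inr fun r hr => absurd hr (by simp)
    · by_cases hq : f q = true
      · rw [List.filter_cons_of_pos hq]
        rcases ih hs' h with h' | h'
        · exact Or.inl (Or.inr ⟨he, h'⟩)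
        · exact Or.inr fun r hr => by
            rcases List.mem_cons.1 hr with rfl | hr
            · exact he
            · exact h' r hr
      · have : (q :: L).filter f = [] := by
          rw [List.filter_eq_nil_iff]
          intro a ha
          rcases List.mem_cons.1 ha with rfl | ha
          · simpa using hq
          · intro hfa
            exact hq (hf q a (hlt a ha).le (by simpa using hfa))
        rw [this]
        exact Or.inr fun r hr => absurd hr (by simp)

/-- build a strict lex comparison from: agreement below `p`, strict at `p ∈ L`. -/
theorem sLt_of_agree_lt : ∀ {L : List ℕ}, L.Pairwise (· < ·) → ∀ {p t s}, p ∈ L →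
    (∀ q ∈ L, q < p → t q = s q) → t p < s p → sLt L t s := by
  intro L
  induction L with
  | nil => intro _ p t s hp; exact absurd hp List.not_mem_nil
  | cons q L ih =>
    intro hs p t s hp hagree hlt
    have hs' : L.Pairwise (· < ·) := (List.pairwise_cons.1 hs).2
    have hq : ∀ r ∈ L, q < r := (List.pairwise_cons.1 hs).1
    rcases List.mem_cons.1 hp with rfl | hp
    · exact Or.inl hlt
    · exact Or.inr ⟨hagree q (List.mem_cons_self) (hq p hp),
        ih hs' hp (fun r hr h => hagree r (List.mem_cons_of_mem _ hr) h) hlt⟩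



open OrdinalApprox Cardinal Order

section FixpointMachinery

variable (G : ParityGame)

abbrev Env := ℕ → Set G.V

/-- one-step controlled predecessor for Player 0 (`false`). -/
def cpre (S : Set G.V) : Set G.V :=
  {v | if G.owner v = false then ∃ w, G.R v w ∧ w ∈ S else ∀ w, G.R v w → w ∈ S}

theorem cpre_mono {S S' : Set G.V} (h : S ≤ S') : cpre G S ≤ cpre G S' := by
  intro v hv
  simp only [cpre, Set.mem_setOf_eq] at hv ⊢
  split at hv <;> rename_i hw
  · rw [if_pos hw]
    obtain ⟨w, hw1, hw2⟩ := hv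
    exact ⟨w, hw1, h hw2⟩
  · rw [if_neg hw]
    exact fun w hw1 => h (hv w hw1)

def body : Env G →o Set G.V :=
  ⟨fun ρ => {v | v ∈ cpre G (ρ (G.ω v))},
   fun ρ ρ' h v hv => cpre_mono G (h (G.ω v)) hv⟩

theorem update_mono_left {ρ ρ' : Env G} (h : ρ ≤ ρ') (p : ℕ) (X : Set G.V) :
    Function.update ρ p X ≤ Function.update ρ' p X := by
  intro q
  rcases eq_or_ne q p with rfl | hq
  · simp
  · simpa [Function.update_of_ne hq] using h q

theorem update_mono_right (ρ : Env G) (p : ℕ) {X Y : Set G.V} (h : X ≤ Y) :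
    Function.update ρ p X ≤ Function.update ρ p Y := by
  intro q
  rcases eq_or_ne q p with rfl | hq
  · simpa using h
  · simp [Function.update_of_ne hq]

def innerHom (S : Env G →o Set G.V) (ρ : Env G) (p : ℕ) : Set G.V →o Set G.V :=
  ⟨fun X => S (Function.update ρ p X),
   fun _ _ h => S.mono (update_mono_right G ρ p h)⟩

theorem innerHom_mono_env (S : Env G →o Set G.V) {ρ ρ' : Env G} (h : ρ ≤ ρ') (p : ℕ) :
    innerHom G S ρ p ≤ innerHom G S ρ' p :=
  fun X => S.mono (update_mono_left G h p X)

def solveHom : List ℕ → (Env G →o Set G.V)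
  | [] => body G
  | p :: l =>
    { toFun := fun ρ => if Odd p then (innerHom G (solveHom l) ρ p).lfp
                        else (innerHom G (solveHom l) ρ p).gfp
      monotone' := by
        intro ρ ρ' h
        have hi := innerHom_mono_env G (solveHom l) h p
        by_cases hp : Odd p
        · simpa [hp] using OrderHom.lfp.monotone hi
        · simpa [hp] using OrderHom.gfp.monotone hi }

def Lam : Ordinal := ord (succ #(Set G.V))

def stageSet (l : List ℕ) (p : ℕ) (t : ℕ → Ordinal) (ρ : Env G) : Set G.V :=
  if Odd p then lfpApprox (innerHom G (solveHom G l) ρ p) ⊥ (t p)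
  else (innerHom G (solveHom G l) ρ p).gfp

def finalEnv : List ℕ → (ℕ → Ordinal) → Env G → Env G
  | [], _, ρ => ρ
  | p :: l, t, ρ => finalEnv l t (Function.update ρ p (stageSet G l p t ρ))

def aset (l : List ℕ) (t : ℕ → Ordinal) (ρ : Env G) : Set G.V := body G (finalEnv G l t ρ)

end FixpointMachinery

section ApproxFacts

variable {α : Type} [CompleteLattice α]

theorem stage_le_lfp (f : α →o α) (o : Ordinal) : lfpApprox f ⊥ o ≤ f.lfp :=
  lfpApprox_le_of_mem_fixedPoints f (x := ⊥) f.isFixedPt_lfp bot_le o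

theorem stage_eq_lfp (f : α →o α) {o : Ordinal} (h : ord (succ #α) ≤ o) :
    lfpApprox f ⊥ o = f.lfp := by
  rw [← lfpApprox_ord_eq_lfp]
  exact lfpApprox_eq_of_mem_fixedPoints f (x := ⊥) h (lfpApprox_ord_mem_fixedPoint f (x := ⊥) bot_le)

theorem mem_lfpApprox {V : Type} (f : Set V →o Set V) {o : Ordinal} {w : V}
    (h : w ∈ lfpApprox f ⊥ o) : ∃ o' < o, w ∈ f (lfpApprox f ⊥ o') := by
  rw [lfpApprox] at h
  simp only [Set.sup_eq_union, Set.iSup_eq_iUnion, Set.bot_eq_empty, Set.empty_union,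
    Set.mem_iUnion] at h
  obtain ⟨b, hb, hws⟩ := h
  exact ⟨b, hb, hws⟩

end ApproxFacts

section FixpointLemmas

variable (G : ParityGame)

theorem finalEnv_not_mem : ∀ {l : List ℕ} {t ρ} {p : ℕ}, p ∉ l → finalEnv G l t ρ p = ρ p := by
  intro l
  induction l with
  | nil => intro t ρ p _; rfl
  | cons q l ih =>
    intro t ρ p hp
    have h1 : p ∉ l := fun h => hp (List.mem_cons_of_mem _ h)
    have h2 : p ≠ q := fun h => hp (h ▸ List.mem_cons_self)
    show finalEnv G l t (Function.update ρ q (stageSet G l q t ρ)) p = ρ p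
    rw [ih h1, Function.update_of_ne h2]

theorem stageSet_congr {l : List ℕ} {q : ℕ} {t t' : ℕ → Ordinal} {ρ : Env G}
    (h : t q = t' q) : stageSet G l q t ρ = stageSet G l q t' ρ := by
  unfold stageSet
  rw [h]

theorem stageSet_mono {l : List ℕ} {q : ℕ} {t t' : ℕ → Ordinal} {ρ ρ' : Env G}
    (ht : ∀ r, t r ≤ t' r) (hρ : ρ ≤ ρ') : stageSet G l q t ρ ≤ stageSet G l q t' ρ' := by
  unfold stageSet
  by_cases hq : Odd q
  · simp only [if_pos hq]
    calc lfpApprox (innerHom G (solveHom G l) ρ q) ⊥ (t q)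
        ≤ lfpApprox (innerHom G (solveHom G l) ρ q) ⊥ (t' q) :=
          lfpApprox_mono_right _ (ht q)
      _ ≤ lfpApprox (innerHom G (solveHom G l) ρ' q) ⊥ (t' q) :=
          lfpApprox_mono_left (innerHom_mono_env G _ hρ q) ⊥ (t' q)
  · simp only [if_neg hq]
    exact OrderHom.gfp.monotone (innerHom_mono_env G _ hρ q)

theorem finalEnv_mono : ∀ (l : List ℕ) {t t' ρ ρ'}, (∀ r, t r ≤ t' r) → ρ ≤ ρ' →
    finalEnv G l t ρ ≤ finalEnv G l t' ρ' := by
  intro l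
  induction l with
  | nil => intro t t' ρ ρ' _ hρ; exact hρ
  | cons q l ih =>
    intro t t' ρ ρ' ht hρ
    apply ih ht
    intro r
    rcases eq_or_ne r q with rfl | hr
    · simpa using stageSet_mono G ht hρ (l := l) (q := r)
    · simpa [Function.update_of_ne hr] using hρ r

theorem finalEnv_congr : ∀ {l : List ℕ} {t t' ρ}, (∀ q ∈ l, t q = t' q) →
    finalEnv G l t ρ = finalEnv G l t' ρ := by
  intro l
  induction l with
  | nil => intro t t' ρ _; rfl
  | cons q l ih =>
    intro t t' ρ h
    show finalEnv G l t _ = finalEnv G l t' _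
    rw [stageSet_congr G (h q (List.mem_cons_self)),
      ih fun r hr => h r (List.mem_cons_of_mem _ hr)]

theorem aset_mono {l : List ℕ} {t t' ρ ρ'} (ht : ∀ r, t r ≤ t' r) (hρ : ρ ≤ ρ') :
    aset G l t ρ ≤ aset G l t' ρ' :=
  (body G).mono (finalEnv_mono G l ht hρ)

theorem solve_cons_eq (p : ℕ) (l : List ℕ) (ρ : Env G) :
    solveHom G (p :: l) ρ = solveHom G l (Function.update ρ p (solveHom G (p :: l) ρ)) := by
  by_cases hp : Odd p
  · have h1 : solveHom G (p :: l) ρ = (innerHom G (solveHom G l) ρ p).lfp := by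
      simp [solveHom, hp]
    rw [h1]
    exact ((innerHom G (solveHom G l) ρ p).map_lfp).symm
  · have h1 : solveHom G (p :: l) ρ = (innerHom G (solveHom G l) ρ p).gfp := by
      simp [solveHom, hp]
    rw [h1]
    exact ((innerHom G (solveHom G l) ρ p).map_gfp).symm

theorem aset_top : ∀ {l : List ℕ} {t ρ}, (∀ p ∈ l, Lam G ≤ t p) →
    aset G l t ρ = solveHom G l ρ := by
  intro l
  induction l with
  | nil => intro t ρ _; rfl
  | cons p l ih =>
    intro t ρ h
    show aset G l t (Function.update ρ p (stageSet G l p t ρ)) = _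
    have hst : stageSet G l p t ρ = solveHom G (p :: l) ρ := by
      unfold stageSet
      by_cases hp : Odd p
      · rw [if_pos hp, stage_eq_lfp _ (h p (List.mem_cons_self))]
        simp [solveHom, hp, Lam]
      · rw [if_neg hp]
        simp [solveHom, hp]
    rw [hst, ih fun q hq => h q (List.mem_cons_of_mem _ hq), ← solve_cons_eq]

theorem aset_le_solve : ∀ {l : List ℕ} {t ρ}, aset G l t ρ ≤ solveHom G l ρ := by
  intro l
  induction l with
  | nil => intro t ρ; exact le_rfl
  | cons p l ih =>
    intro t ρ
    show aset G l t (Function.update ρ p (stageSet G l p t ρ)) ≤ _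
    have hst : stageSet G l p t ρ ≤ solveHom G (p :: l) ρ := by
      unfold stageSet
      by_cases hp : Odd p
      · rw [if_pos hp]
        have := stage_le_lfp (innerHom G (solveHom G l) ρ p) (t p)
        simpa [solveHom, hp] using this
      · rw [if_neg hp]
        simp [solveHom, hp]
    calc aset G l t (Function.update ρ p (stageSet G l p t ρ))
        ≤ solveHom G l (Function.update ρ p (stageSet G l p t ρ)) := ih
      _ ≤ solveHom G l (Function.update ρ p (solveHom G (p :: l) ρ)) :=
          (solveHom G l).mono (update_mono_right G ρ p hst)
      _ = solveHom G (p :: l) ρ := (solve_cons_eq G p l ρ).symm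

/-- the tuple used in the unfolding lemma -/
def cut (Λ : Ordinal) (t : ℕ → Ordinal) (p : ℕ) (o : Ordinal) : ℕ → Ordinal :=
  fun q => if q < p then t q else if q = p then o else Λ

theorem cut_lt {Λ t p o q} (h : q < p) : cut Λ t p o q = t q := if_pos h

theorem cut_self {Λ t p o} : cut Λ t p o p = o := by simp [cut]

theorem cut_gt {Λ t p o q} (h : p < q) : cut Λ t p o q = Λ := by
  simp [cut, Nat.lt_asymm h, Nat.ne_of_gt h]

theorem unfold_odd : ∀ {l : List ℕ}, l.Pairwise (· < ·) → ∀ {p : ℕ}, p ∈ l → Odd p →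
    ∀ {ρ t} {w : G.V}, w ∈ finalEnv G l t ρ p →
    ∃ o < t p, w ∈ aset G l (cut (Lam G) t p o) ρ := by
  intro l
  induction l with
  | nil => intro _ p hp; exact absurd hp List.not_mem_nil
  | cons q l ih =>
    intro hs p hp hodd ρ t w hw
    have hs' : l.Pairwise (· < ·) := (List.pairwise_cons.1 hs).2
    have hlt : ∀ r ∈ l, q < r := (List.pairwise_cons.1 hs).1
    rcases List.mem_cons.1 hp with rfl | hp
    · -- p = q
      have hnp : p ∉ l := fun h => lt_irrefl p (hlt p h)
      rw [show finalEnv G (p :: l) t ρ = finalEnv G l t (Function.update ρ p (stageSet G l p t ρ)) from rfl,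
        finalEnv_not_mem G hnp, Function.update_self] at hw
      rw [stageSet, if_pos hodd] at hw
      obtain ⟨o, ho, hwo⟩ := mem_lfpApprox _ hw
      refine ⟨o, ho, ?_⟩
      show w ∈ aset G l (cut (Lam G) t p o)
        (Function.update ρ p (stageSet G l p (cut (Lam G) t p o) ρ))
      have hst : stageSet G l p (cut (Lam G) t p o) ρ =
          lfpApprox (innerHom G (solveHom G l) ρ p) ⊥ o := by
        rw [stageSet, if_pos hodd, cut_self]
      rw [hst, aset_top G fun r hr => by rw [cut_gt (hlt r hr)]]
      exact hwo
    · -- p ∈ l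
      have hqp : q < p := hlt p hp
      obtain ⟨o, ho, hwo⟩ := ih hs' hp hodd hw
      refine ⟨o, ho, ?_⟩
      show w ∈ aset G l (cut (Lam G) t p o)
        (Function.update ρ q (stageSet G l q (cut (Lam G) t p o) ρ))
      rw [stageSet_congr G (cut_lt hqp)]
      exact hwo

theorem unfold_even : ∀ {l : List ℕ}, l.Pairwise (· < ·) → ∀ {p : ℕ}, p ∈ l → ¬ Odd p →
    ∀ {ρ t} {w : G.V}, w ∈ finalEnv G l t ρ p →
    w ∈ aset G l (cut (Lam G) t p (Lam G)) ρ := by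
  intro l
  induction l with
  | nil => intro _ p hp; exact absurd hp List.not_mem_nil
  | cons q l ih =>
    intro hs p hp hev ρ t w hw
    have hs' : l.Pairwise (· < ·) := (List.pairwise_cons.1 hs).2
    have hlt : ∀ r ∈ l, q < r := (List.pairwise_cons.1 hs).1
    rcases List.mem_cons.1 hp with rfl | hp
    · have hnp : p ∉ l := fun h => lt_irrefl p (hlt p h)
      rw [show finalEnv G (p :: l) t ρ = finalEnv G l t (Function.update ρ p (stageSet G l p t ρ)) from rfl,
        finalEnv_not_mem G hnp, Function.update_self] at hw
      rw [stageSet, if_neg hev] at hw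
      have hw' : w ∈ (innerHom G (solveHom G l) ρ p)
          ((innerHom G (solveHom G l) ρ p).gfp) := by
        rw [OrderHom.map_gfp]; exact hw
      show w ∈ aset G l (cut (Lam G) t p (Lam G))
        (Function.update ρ p (stageSet G l p (cut (Lam G) t p (Lam G)) ρ))
      have hst : stageSet G l p (cut (Lam G) t p (Lam G)) ρ =
          (innerHom G (solveHom G l) ρ p).gfp := by
        rw [stageSet, if_neg hev]
      rw [hst, aset_top G fun r hr => by rw [cut_gt (hlt r hr)]]
      exact hw'
    · have hqp : q < p := hlt p hp
      have hwo := ih hs' hp hev hw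
      show w ∈ aset G l (cut (Lam G) t p (Lam G))
        (Function.update ρ q (stageSet G l q (cut (Lam G) t p (Lam G)) ρ))
      rw [stageSet_congr G (cut_lt hqp)]
      exact hwo

end FixpointLemmas

section Duality

def dualHom {V : Type} (f : Set V →o Set V) : Set V →o Set V :=
  ⟨fun Y => (f Yᶜ)ᶜ, fun Y Z h => compl_le_compl (f.mono (compl_le_compl h))⟩

theorem compl_lfp {V : Type} (f : Set V →o Set V) :
    (OrderHom.lfp f)ᶜ = OrderHom.gfp (dualHom f) := by
  apply le_antisymm
  · apply OrderHom.le_gfp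
    show _ ≤ (f (OrderHom.lfp f)ᶜᶜ)ᶜ
    rw [compl_compl, OrderHom.map_lfp]
  · have h2 : f ((OrderHom.gfp (dualHom f))ᶜ) ≤ (OrderHom.gfp (dualHom f))ᶜ := by
      have h3 : OrderHom.gfp (dualHom f) ≤ (f ((OrderHom.gfp (dualHom f))ᶜ))ᶜ :=
        (OrderHom.map_gfp (dualHom f)).ge
      calc f ((OrderHom.gfp (dualHom f))ᶜ)
          = (f ((OrderHom.gfp (dualHom f))ᶜ))ᶜᶜ := (compl_compl _).symm
        _ ≤ (OrderHom.gfp (dualHom f))ᶜ := compl_le_compl h3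
    have h1 : OrderHom.lfp f ≤ (OrderHom.gfp (dualHom f))ᶜ := f.lfp_le h2
    calc OrderHom.gfp (dualHom f) = (OrderHom.gfp (dualHom f))ᶜᶜ := (compl_compl _).symm
      _ ≤ (OrderHom.lfp f)ᶜ := compl_le_compl h1

theorem dualHom_dualHom {V : Type} (f : Set V →o Set V) : dualHom (dualHom f) = f := by
  apply OrderHom.ext
  funext Y
  show ((f Yᶜᶜ)ᶜ)ᶜ = f Y
  rw [compl_compl, compl_compl]

theorem compl_gfp {V : Type} (f : Set V →o Set V) :
    (OrderHom.gfp f)ᶜ = OrderHom.lfp (dualHom f) := by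
  have h := congrArg compl (compl_lfp (dualHom f))
  rw [compl_compl, dualHom_dualHom] at h
  exact h.symm

def dualPG (G : ParityGame) : ParityGame :=
  ⟨G.V, fun v => !G.owner v, G.R, fun v => G.ω v + 1⟩

theorem cpre_dual (G : ParityGame) (S : Set G.V) :
    cpre (dualPG G) S = (cpre G Sᶜ)ᶜ := by
  ext v
  show (if (dualPG G).owner v = false then ∃ w, G.R v w ∧ w ∈ S else ∀ w, G.R v w → w ∈ S)
    ↔ ¬ (if G.owner v = false then ∃ w, G.R v w ∧ w ∈ Sᶜ else ∀ w, G.R v w → w ∈ Sᶜ)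
  have hco : (dualPG G).owner v = !G.owner v := rfl
  rw [hco]
  cases hov : G.owner v
  · simp only [Bool.not_false, if_neg (by simp : ¬(true : Bool) = false), if_pos rfl]
    constructor
    · rintro h ⟨w, hw, hw2⟩
      exact hw2 (h w hw)
    · intro h w hw
      by_contra hc
      exact h ⟨w, hw, hc⟩
  · simp only [Bool.not_true, if_pos rfl, if_neg (by simp : ¬(true : Bool) = false)]
    constructor
    · rintro ⟨w, hw, hS⟩ h
      exact (h w hw) hS
    · intro h
      by_contra hc
      apply h
      intro w hw
      show w ∉ S
      intro hS
      exact hc ⟨w, hw, hS⟩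

theorem solve_congr (G : ParityGame) :
    ∀ {l : List ℕ} {ρ₁ ρ₂ : Env G}, (∀ q, (∃ v, G.ω v = q) → ρ₁ q = ρ₂ q) →
    solveHom G l ρ₁ = solveHom G l ρ₂ := by
  intro l
  induction l with
  | nil =>
    intro ρ₁ ρ₂ h
    show body G ρ₁ = body G ρ₂
    ext v
    show v ∈ cpre G (ρ₁ (G.ω v)) ↔ v ∈ cpre G (ρ₂ (G.ω v))
    rw [h (G.ω v) ⟨v, rfl⟩]
  | cons p l ih =>
    intro ρ₁ ρ₂ h
    have hom_eq : innerHom G (solveHom G l) ρ₁ p = innerHom G (solveHom G l) ρ₂ p := by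
      apply OrderHom.ext
      funext X
      show solveHom G l (Function.update ρ₁ p X) = solveHom G l (Function.update ρ₂ p X)
      apply ih
      intro q hq
      rcases eq_or_ne q p with rfl | hqp
      · simp
      · rw [Function.update_of_ne hqp, Function.update_of_ne hqp]
        exact h q hq
    show (if Odd p then (innerHom G (solveHom G l) ρ₁ p).lfp else _) = _
    rw [hom_eq]
    rfl

theorem solve_dual (G : ParityGame) :
    ∀ (l : List ℕ) (ρ : Env G),
    (solveHom G l ρ : Set G.V)ᶜ =
      solveHom (dualPG G) (l.map (· + 1)) (fun q => (ρ (q - 1))ᶜ) := by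
  intro l
  induction l with
  | nil =>
    intro ρ
    show (body G ρ)ᶜ = body (dualPG G) _
    ext v
    simp only [Set.mem_compl_iff]
    show v ∉ cpre G (ρ (G.ω v)) ↔ v ∈ cpre (dualPG G) ((ρ (G.ω v + 1 - 1))ᶜ)
    erw [cpre_dual G, Nat.add_sub_cancel, compl_compl]
    exact (Set.mem_compl_iff _ _).symm
  | cons p l ih =>
    intro ρ
    have hom_eq : dualHom (innerHom G (solveHom G l) ρ p) =
        innerHom (dualPG G) (solveHom (dualPG G) (l.map (· + 1)))
          (fun q => (ρ (q - 1))ᶜ) (p + 1) := by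
      apply OrderHom.ext
      funext Y
      show (solveHom G l (Function.update ρ p Yᶜ))ᶜ =
        solveHom (dualPG G) (l.map (· + 1))
          (Function.update (fun q => (ρ (q - 1))ᶜ) (p + 1) Y)
      rw [ih (Function.update ρ p Yᶜ)]
      apply solve_congr
      rintro q ⟨v, hv⟩
      have hq1 : 1 ≤ q := by
        rw [← hv]; exact Nat.le_add_left 1 _
      rcases eq_or_ne q (p + 1) with rfl | hqp
      · erw [Nat.add_sub_cancel, Function.update_self, Function.update_self, compl_compl]
      · have hqp' : q - 1 ≠ p := fun h => hqp (by omega)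
        erw [Function.update_of_ne hqp', Function.update_of_ne hqp]
    by_cases hp : Odd p
    · have hL : (solveHom G (p :: l)) ρ = (innerHom G (solveHom G l) ρ p).lfp := by
        simp [solveHom, hp]
      have hR : (solveHom (dualPG G) ((p :: l).map (· + 1))) (fun q => (ρ (q - 1))ᶜ) =
          (innerHom (dualPG G) (solveHom (dualPG G) (l.map (· + 1)))
            (fun q => (ρ (q - 1))ᶜ) (p + 1)).gfp := by
        have : ¬ Odd (p + 1) := by simp [Nat.odd_add_one, hp]
        simp [solveHom, this]
      rw [hL, hR, compl_lfp, hom_eq]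
      rfl
    · have hL : (solveHom G (p :: l)) ρ = (innerHom G (solveHom G l) ρ p).gfp := by
        simp [solveHom, hp]
      have hR : (solveHom (dualPG G) ((p :: l).map (· + 1))) (fun q => (ρ (q - 1))ᶜ) =
          (innerHom (dualPG G) (solveHom (dualPG G) (l.map (· + 1)))
            (fun q => (ρ (q - 1))ᶜ) (p + 1)).lfp := by
        have : Odd (p + 1) := by simp [Nat.odd_add_one, hp]
        simp [solveHom, this]
      rw [hL, hR, compl_gfp, hom_eq]
      rfl

end Duality


section Signatures

variable (G : ParityGame) (C : List ℕ) (ρb : Env G)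

def Od : List ℕ := C.filter (fun q => decide (Odd q))

def Lp (p : ℕ) : List ℕ := (Od C).filter (fun q => decide (q ≤ p))

def SigSet (v : G.V) : Set (ℕ → Ordinal) := {t | v ∈ aset G C t ρb}

def Wset : Set G.V := solveHom G C ρb

def sig (v : G.V) : ℕ → Ordinal :=
  if h : (SigSet G C ρb v).Nonempty then ((sLt_wf (Od C)).has_min _ h).choose
  else fun _ => 0

theorem Od_sorted (hC : C.Pairwise (· < ·)) : (Od C).Pairwise (· < ·) :=
  List.Pairwise.filter _ hC

theorem Lp_sorted (hC : C.Pairwise (· < ·)) (p : ℕ) : (Lp C p).Pairwise (· < ·) :=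
  List.Pairwise.filter _ (Od_sorted C hC)

theorem mem_Lp {p q : ℕ} (hq : q ∈ C) (ho : Odd q) (hle : q ≤ p) : q ∈ Lp C p := by
  simp only [Lp, Od, List.mem_filter, decide_eq_true_iff]
  exact ⟨⟨hq, ho⟩, hle⟩

theorem mem_Lp_elim {p q : ℕ} (hq : q ∈ Lp C p) : q ∈ C ∧ Odd q ∧ q ≤ p := by
  simp only [Lp, Od, List.mem_filter, decide_eq_true_iff] at hq
  exact ⟨hq.1.1, hq.1.2, hq.2⟩

theorem sig_mem {v : G.V} (h : (SigSet G C ρb v).Nonempty) :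
    sig G C ρb v ∈ SigSet G C ρb v := by
  rw [sig, dif_pos h]
  exact ((sLt_wf (Od C)).has_min _ h).choose_spec.1

theorem sig_min {v : G.V} {t : ℕ → Ordinal} (ht : t ∈ SigSet G C ρb v) :
    sLe (Od C) (sig G C ρb v) t := by
  have h : (SigSet G C ρb v).Nonempty := ⟨t, ht⟩
  rw [sig, dif_pos h]
  have hmin := ((sLt_wf (Od C)).has_min _ h).choose_spec.2
  rcases sLt_trichot (Od C) ((sLt_wf (Od C)).has_min _ h).choose t with h' | h' | h'
  · exact Or.inl h'
  · exact Or.inr h'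
  · exact absurd h' (hmin t ht)

theorem sigset_nonempty (hC : C.Pairwise (· < ·)) {v : G.V} (h : v ∈ Wset G C ρb) :
    (SigSet G C ρb v).Nonempty := by
  refine ⟨fun _ => Lam G, ?_⟩
  show v ∈ aset G C (fun _ => Lam G) ρb
  rw [aset_top G fun p _ => le_rfl]
  exact h

/-- the progress relation along an edge, relative to priority of the source -/
def prog (m : G.V → ℕ → Ordinal) (v w : G.V) : Prop :=
  sLe (Lp C (G.ω v)) (m w) (m v) ∧ (Odd (G.ω v) → sLt (Lp C (G.ω v)) (m w) (m v))

theorem sLe_restrict (hC : C.Pairwise (· < ·)) {p : ℕ} {t s : ℕ → Ordinal}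
    (h : sLe (Od C) t s) : sLe (Lp C p) t s :=
  sLe_filter (fun a b hab hb => by
    simp only [decide_eq_true_iff] at hb ⊢
    exact hab.trans hb) (Od_sorted C hC) h

theorem pm_exists (hC : C.Pairwise (· < ·)) (hcov : ∀ v, G.ω v ∈ C) :
    ∀ v ∈ Wset G C ρb,
      (G.owner v = false → ∃ w, G.R v w ∧ w ∈ Wset G C ρb ∧ prog G C (sig G C ρb) v w) ∧
      (G.owner v ≠ false → ∀ w, G.R v w → w ∈ Wset G C ρb ∧ prog G C (sig G C ρb) v w) := by
  intro v hv
  have hne : (SigSet G C ρb v).Nonempty := sigset_nonempty G C ρb hC hv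
  have hmem : v ∈ aset G C (sig G C ρb v) ρb := sig_mem G C ρb hne
  set t := sig G C ρb v with ht
  set p := G.ω v with hp
  have hcpre : v ∈ cpre G (finalEnv G C t ρb p) := hmem
  have succ_good : ∀ w ∈ finalEnv G C t ρb p,
      w ∈ Wset G C ρb ∧ prog G C (sig G C ρb) v w := by
    intro w hw
    by_cases hodd : Odd p
    · obtain ⟨o, ho, hwo⟩ := unfold_odd G hC (hcov v) hodd hw
      set t' := cut (Lam G) t p o with ht'
      have hWw : w ∈ Wset G C ρb := aset_le_solve G hwo
      have h1 : sLe (Od C) (sig G C ρb w) t' := sig_min G C ρb hwo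
      have h1' : sLe (Lp C p) (sig G C ρb w) t' := sLe_restrict C hC h1
      have h2 : sLt (Lp C p) t' t := by
        apply sLt_of_agree_lt (Lp_sorted C hC p) (mem_Lp C (hcov v) hodd le_rfl)
        · intro q hq hqp
          exact cut_lt hqp
        · rw [ht', cut_self]
          exact ho
      have h3 : sLt (Lp C p) (sig G C ρb w) t := sLt_of_sLe_sLt h1' h2
      exact ⟨hWw, Or.inl h3, fun _ => h3⟩
    · have hwo := unfold_even G hC (hcov v) hodd hw
      set t' := cut (Lam G) t p (Lam G) with ht'
      have hWw : w ∈ Wset G C ρb := aset_le_solve G hwo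
      have h1 : sLe (Od C) (sig G C ρb w) t' := sig_min G C ρb hwo
      have h1' : sLe (Lp C p) (sig G C ρb w) t' := sLe_restrict C hC h1
      have h2 : eqOn (Lp C p) t' t := by
        intro q hq
        obtain ⟨hqC, hqo, hqp⟩ := mem_Lp_elim C hq
        have hqlt : q < p := lt_of_le_of_ne hqp (fun h => hodd (h ▸ hqo))
        exact cut_lt hqlt
      have h3 : sLe (Lp C p) (sig G C ρb w) t := sLe_trans h1' (Or.inr h2)
      exact ⟨hWw, h3, fun h => absurd h hodd⟩
  constructor
  · intro hov
    rw [cpre, Set.mem_setOf_eq, if_pos hov] at hcpre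
    obtain ⟨w, hw1, hw2⟩ := hcpre
    exact ⟨w, hw1, succ_good w hw2⟩
  · intro hov
    rw [cpre, Set.mem_setOf_eq, if_neg hov] at hcpre
    exact fun w hw => succ_good w (hcpre w hw)

end Signatures

section Plays

theorem infpri_nonempty (G : ParityGame) (hfin : (Set.range G.ω).Finite)
    {p : ℕ → Option G.V} (hp : ∀ n, (p n).isSome) :
    {c | {n | ∃ v, p n = some v ∧ G.ω v = c}.Infinite}.Nonempty := by
  by_contra h
  have h' : ∀ c, ¬ {n | ∃ v, p n = some v ∧ G.ω v = c}.Infinite := fun c hc => h ⟨c, hc⟩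
  have hsub : (Set.univ : Set ℕ) ⊆
      ⋃ c ∈ Set.range G.ω, {n | ∃ v, p n = some v ∧ G.ω v = c} := by
    intro n _
    obtain ⟨v, hv⟩ := Option.isSome_iff_exists.1 (hp n)
    exact Set.mem_biUnion ⟨v, rfl⟩ ⟨v, hv, rfl⟩
  have hfin2 : (⋃ c ∈ Set.range G.ω, {n | ∃ v, p n = some v ∧ G.ω v = c}).Finite :=
    Set.Finite.biUnion hfin (fun c _ => Set.not_infinite.1 (h' c))
  exact (Set.infinite_univ.mono hsub) hfin2

theorem Lp_restrict {C : List ℕ} {P X : ℕ} (h : P ≤ X) :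
    Lp C P = (Lp C X).filter (fun q => decide (q ≤ P)) := by
  unfold Lp
  rw [List.filter_filter]
  congr 1
  funext a
  by_cases ha : a ≤ P
  · simp [ha, ha.trans h]
  · simp [ha]

theorem pm_win (G : ParityGame) [Nonempty G.V] (hfin : (Set.range G.ω).Finite)
    (C : List ℕ) (hC : C.Pairwise (· < ·))
    (W : Set G.V) (m : G.V → ℕ → Ordinal)
    (hpm : ∀ v ∈ W, (G.owner v = false → ∃ w, G.R v w ∧ w ∈ W ∧ prog G C m v w) ∧
                    (G.owner v ≠ false → ∀ w, G.R v w → w ∈ W ∧ prog G C m v w)) :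
    ∃ σ : G.Strategy false, σ.Memoryless ∧ ∀ y ∈ W, G.WinningFrom false σ y := by
  classical
  set nxt : G.V → G.V := fun v =>
    if h : v ∈ W ∧ G.owner v = false then Classical.choose ((hpm v h.1).1 h.2)
    else if h2 : ∃ w, G.R v w then Classical.choose h2 else Classical.arbitrary G.V
    with hnxt
  have hvalid : ∀ (h : List G.V) v, G.owner v = false → (∃ w, G.R v w) → G.R v (nxt v) := by
    intro _ v hov hex
    by_cases hW : v ∈ W
    · rw [hnxt]
      simp only [dif_pos (And.intro hW hov)]
      exact (Classical.choose_spec ((hpm v hW).1 hov)).1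
    · rw [hnxt]
      simp only [dif_neg (fun hh : v ∈ W ∧ _ => hW hh.1), dif_pos hex]
      exact Classical.choose_spec hex
  refine ⟨⟨fun _ v => nxt v, hvalid⟩, fun _ _ _ => rfl, ?_⟩
  intro y hy p hplay
  obtain ⟨h0, h2, h3, h4, h5⟩ := hplay
  have inv : ∀ n v, p n = some v → v ∈ W := by
    intro n
    induction n with
    | zero =>
      intro v hv
      rw [h0] at hv
      injection hv with hv
      exact hv ▸ hy
    | succ n ih =>
      intro w hw
      cases hpn : p n with
      | none => rw [h3 n hpn] at hw; cases hw
      | some v =>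
        have hvW := ih v hpn
        have hedge := h4 n v w hpn hw
        by_cases hov : G.owner v = false
        · have h5' := h5 n v w hpn hw hov
          have hn : nxt v = Classical.choose ((hpm v hvW).1 hov) := by
            rw [hnxt]; simp only [dif_pos (And.intro hvW hov)]
          rw [h5']
          show nxt v ∈ W
          rw [hn]
          exact (Classical.choose_spec ((hpm v hvW).1 hov)).2.1
        · exact ((hpm v hvW).2 hov w hedge).1
  have stepP : ∀ n v w, p n = some v → p (n + 1) = some w → prog G C m v w := by
    intro n v w hv hw
    have hvW := inv n v hv
    have hedge := h4 n v w hv hw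
    by_cases hov : G.owner v = false
    · have h5' := h5 n v w hv hw hov
      have hn : nxt v = Classical.choose ((hpm v hvW).1 hov) := by
        rw [hnxt]; simp only [dif_pos (And.intro hvW hov)]
      rw [h5']
      show prog G C m v (nxt v)
      rw [hn]
      exact (Classical.choose_spec ((hpm v hvW).1 hov)).2.2
    · exact ((hpm v hvW).2 hov w hedge).2
  constructor
  · intro n v hv hnone hov
    have hvW := inv n v hv
    have hnos : ¬ ∃ w, G.R v w := (h2 n v hv).1 hnone
    obtain ⟨w, hw, _⟩ := (hpm v hvW).1 hov
    exact hnos ⟨w, hw⟩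
  · intro hall
    refine iff_of_true ?_ rfl
    have hSne := infpri_nonempty G hfin hall
    set S := {c | {n | ∃ v, p n = some v ∧ G.ω v = c}.Infinite} with hS
    set P := sInf S with hPdef
    have hPS : P ∈ S := Nat.sInf_mem hSne
    by_contra hodd'
    have hodd : Odd P := Nat.not_even_iff_odd.1 hodd'
    have hex : ∀ n, ∃ v, p n = some v := fun n => Option.isSome_iff_exists.1 (hall n)
    choose vf hvf using hex
    have hBfin : (⋃ c ∈ {c | c ∈ Set.range G.ω ∧ c < P},
        {n | ∃ v, p n = some v ∧ G.ω v = c}).Finite := by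
      apply Set.Finite.biUnion (hfin.subset fun c hc => hc.1)
      intro c hc
      exact Set.not_infinite.1 (Nat.notMem_of_lt_sInf hc.2)
    obtain ⟨N, hN⟩ := hBfin.bddAbove
    have hge : ∀ n, N + 1 ≤ n → P ≤ G.ω (vf n) := by
      intro n hn
      by_contra hlt
      push_neg at hlt
      have hmem : n ∈ ⋃ c ∈ {c | c ∈ Set.range G.ω ∧ c < P},
          {n | ∃ v, p n = some v ∧ G.ω v = c} :=
        Set.mem_biUnion ⟨⟨vf n, rfl⟩, hlt⟩ ⟨vf n, hvf n, rfl⟩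
      have := hN hmem
      omega
    have hstep : ∀ n, N + 1 ≤ n →
        sLe (Lp C P) (m (vf (n + 1))) (m (vf n)) ∧
        (G.ω (vf n) = P → sLt (Lp C P) (m (vf (n + 1))) (m (vf n))) := by
      intro n hn
      have hprog := stepP n (vf n) (vf (n + 1)) (hvf n) (hvf (n + 1))
      have hPle := hge n hn
      have hLeq : Lp C P = (Lp C (G.ω (vf n))).filter (fun q => decide (q ≤ P)) :=
        Lp_restrict hPle
      constructor
      · rw [hLeq]
        exact sLe_filter (fun a b hab hb => by
            simp only [decide_eq_true_iff] at hb ⊢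
            exact hab.trans hb) (Lp_sorted C hC _) hprog.1
      · intro hPeq
        have := hprog.2 (hPeq ▸ hodd)
        rw [hPeq] at this
        exact this
    obtain ⟨t₀, ht₀, hmin⟩ := (sLt_wf (Lp C P)).has_min
      {x | ∃ n, N + 1 ≤ n ∧ m (vf n) = x} ⟨m (vf (N + 1)), N + 1, le_rfl, rfl⟩
    obtain ⟨n₀, hn₀, hmn₀⟩ := ht₀
    have chain : ∀ k, sLe (Lp C P) (m (vf (n₀ + k))) (m (vf n₀)) := by
      intro k
      induction k with
      | zero => exact sLe_refl _ _
      | succ k ih =>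
        have h1 := (hstep (n₀ + k) (by omega)).1
        have h2' : sLe (Lp C P) (m (vf (n₀ + (k + 1)))) (m (vf (n₀ + k))) := by
          rw [show n₀ + (k + 1) = (n₀ + k) + 1 by omega]
          exact h1
        exact sLe_trans h2' ih
    obtain ⟨n₁, hn₁S, hn₁gt⟩ := Set.Infinite.exists_gt hPS n₀
    have hP1 : G.ω (vf n₁) = P := by
      obtain ⟨v, hv, hvP⟩ := hn₁S
      rw [hvf n₁] at hv
      injection hv with hv
      rw [← hv] at hvP
      exact hvP
    have hstrict : sLt (Lp C P) (m (vf (n₁ + 1))) (m (vf n₁)) :=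
      (hstep n₁ (by omega)).2 hP1
    have h1 : sLe (Lp C P) (m (vf n₁)) t₀ := by
      have hc := chain (n₁ - n₀)
      rw [show n₀ + (n₁ - n₀) = n₁ by omega] at hc
      rw [← hmn₀]
      exact hc
    exact hmin (m (vf (n₁ + 1))) ⟨n₁ + 1, by omega, rfl⟩ (sLt_of_sLt_sLe hstrict h1)

end Plays

section Transfer

variable (G : ParityGame)

def undualStrat (σ : (dualPG G).Strategy false) : G.Strategy true :=
  ⟨σ.next, fun h v hov hex => σ.valid h v (by
    show (!G.owner v) = false
    rw [hov]
    rfl) hex⟩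

theorem isplay_transfer (σ : (dualPG G).Strategy false) (y : G.V) (p : ℕ → Option G.V)
    (h : G.IsPlayFor true (undualStrat G σ) y p) : (dualPG G).IsPlayFor false σ y p := by
  obtain ⟨a, b, c, d, e⟩ := h
  refine ⟨a, b, c, d, fun n v w hv hw hov => e n v w hv hw ?_⟩
  cases hx : G.owner v
  · exfalso
    have : (dualPG G).owner v = true := by
      show (!G.owner v) = true
      rw [hx]
      rfl
    rw [this] at hov
    cases hov
  · rfl

theorem sInf_shift {S : Set ℕ} (h : S.Nonempty) :
    sInf ((fun c => c + 1) '' S) = sInf S + 1 := by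
  apply le_antisymm
  · exact Nat.sInf_le ⟨sInf S, Nat.sInf_mem h, rfl⟩
  · obtain ⟨c, hc, hceq⟩ := Nat.sInf_mem (h.image (fun c => c + 1))
    rw [← hceq]
    exact Nat.succ_le_succ (Nat.sInf_le hc)

theorem dual_S (p : ℕ → Option G.V) :
    {c | {n | ∃ v, p n = some v ∧ G.ω v + 1 = c}.Infinite}
      = (fun c => c + 1) '' {c | {n | ∃ v, p n = some v ∧ G.ω v = c}.Infinite} := by
  ext c
  cases c with
  | zero =>
    simp only [Set.mem_setOf_eq, Set.mem_image]
    constructor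
    · intro h
      exfalso
      apply h
      have : {n | ∃ v, p n = some v ∧ G.ω v + 1 = 0} = ∅ := by
        ext n
        simp only [Set.mem_setOf_eq, Set.mem_empty_iff_false, iff_false]
        rintro ⟨v, _, hv2⟩
        exact Nat.succ_ne_zero _ hv2
      rw [this]
      exact Set.finite_empty
    · rintro ⟨c', _, hc'⟩
      exact absurd hc' (Nat.succ_ne_zero _)
  | succ c =>
    simp only [Set.mem_setOf_eq, Set.mem_image]
    have hseteq : {n | ∃ v, p n = some v ∧ G.ω v + 1 = c + 1}
        = {n | ∃ v, p n = some v ∧ G.ω v = c} := by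
      ext n
      simp only [Set.mem_setOf_eq]
      constructor
      · rintro ⟨v, hv1, hv2⟩
        exact ⟨v, hv1, Nat.succ_injective hv2⟩
      · rintro ⟨v, hv1, hv2⟩
        exact ⟨v, hv1, by rw [hv2]⟩
    rw [hseteq]
    constructor
    · intro h
      exact ⟨c, h, rfl⟩
    · rintro ⟨c', hc', hceq⟩
      have : c' = c := Nat.succ_injective hceq
      rw [← this]
      exact hc'

theorem winsplay_transfer (hfin : (Set.range G.ω).Finite) (p : ℕ → Option G.V)
    (h : (dualPG G).WinsPlay false p) : G.WinsPlay true p := by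
  obtain ⟨hf, hi⟩ := h
  constructor
  · intro n v hv hn hov
    exact hf n v hv hn (by show (!G.owner v) = false; rw [hov]; rfl)
  · intro hall
    have h2 : Even (sInf {c | {n | ∃ v, p n = some v ∧ G.ω v + 1 = c}.Infinite})
        ↔ (false = false) := hi hall
    have hSne := infpri_nonempty G hfin hall
    rw [dual_S G p, sInf_shift hSne] at h2
    have hEv : Even (sInf {c | {n | ∃ v, p n = some v ∧ G.ω v = c}.Infinite} + 1) := h2.2 rfl
    refine iff_of_false (Nat.even_add_one.1 hEv) (by simp)

theorem transfer_win (hfin : (Set.range G.ω).Finite) (σ : (dualPG G).Strategy false)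
    (hml : σ.Memoryless) (y : G.V) (hwin : (dualPG G).WinningFrom false σ y) :
    ∃ σ' : G.Strategy true, σ'.Memoryless ∧ G.WinningFrom true σ' y := by
  refine ⟨undualStrat G σ, fun h h' v => hml h h' v, ?_⟩
  intro p hp
  exact winsplay_transfer G hfin p (hwin p (isplay_transfer G σ y p hp))

end Transfer

section BothWin

variable (G : ParityGame)

def mkPlay (σ₀ : G.Strategy false) (σ₁ : G.Strategy true) (y : G.V) : ℕ → Option G.V
  | 0 => some y
  | n + 1 =>
    match mkPlay σ₀ σ₁ y n with
    | none => none
    | some v =>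
      if G.owner v
      then (if h : ∃ w, G.R v w then some (σ₁.next [] v) else none)
      else (if h : ∃ w, G.R v w then some (σ₀.next [] v) else none)

theorem not_both (y : G.V) (σ₀ : G.Strategy false) (hml₀ : σ₀.Memoryless)
    (hw₀ : G.WinningFrom false σ₀ y) (σ₁ : G.Strategy true) (hml₁ : σ₁.Memoryless)
    (hw₁ : G.WinningFrom true σ₁ y) : False := by
  classical
  set p := mkPlay G σ₀ σ₁ y with hp
  have h0 : p 0 = some y := rfl
  have hsucc : ∀ n v, p n = some v → p (n + 1) =
      (if G.owner v
       then (if h : ∃ w, G.R v w then some (σ₁.next [] v) else none)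
       else (if h : ∃ w, G.R v w then some (σ₀.next [] v) else none)) := by
    intro n v hv
    show mkPlay G σ₀ σ₁ y (n + 1) = _
    rw [mkPlay, ← hp, hv]
  have hnone : ∀ n, p n = none → p (n + 1) = none := by
    intro n hn
    show mkPlay G σ₀ σ₁ y (n + 1) = none
    rw [mkPlay, ← hp, hn]
  have hcond2 : ∀ n v, p n = some v → (p (n + 1) = none ↔ ¬ ∃ w, G.R v w) := by
    intro n v hv
    rw [hsucc n v hv]
    by_cases hex : ∃ w, G.R v w
    · cases G.owner v <;> simp [hex]
    · cases G.owner v <;> simp [hex]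
  have hcond4 : ∀ n v w, p n = some v → p (n + 1) = some w → G.R v w := by
    intro n v w hv hw
    rw [hsucc n v hv] at hw
    by_cases hex : ∃ w, G.R v w
    · cases hov : G.owner v
      · rw [hov] at hw
        simp only [if_false, dif_pos hex, Bool.false_eq_true] at hw
        injection hw with hw
        rw [← hw]
        exact σ₀.valid [] v hov hex
      · rw [hov] at hw
        simp only [if_true, dif_pos hex] at hw
        injection hw with hw
        rw [← hw]
        exact σ₁.valid [] v hov hex
    · cases hov : G.owner v <;> rw [hov] at hw <;> simp [hex] at hw
  have hplay₀ : G.IsPlayFor false σ₀ y p := by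
    refine ⟨h0, hcond2, hnone, hcond4, ?_⟩
    intro n v w hv hw hov
    rw [hsucc n v hv, hov] at hw
    by_cases hex : ∃ w, G.R v w
    · simp only [Bool.false_eq_true, if_false, dif_pos hex] at hw
      injection hw with hw
      rw [← hw]
      exact hml₀ (G.hist p n) [] v ▸ rfl
    · simp [hex] at hw
  have hplay₁ : G.IsPlayFor true σ₁ y p := by
    refine ⟨h0, hcond2, hnone, hcond4, ?_⟩
    intro n v w hv hw hov
    rw [hsucc n v hv, hov] at hw
    by_cases hex : ∃ w, G.R v w
    · simp only [if_true, dif_pos hex] at hw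
      injection hw with hw
      rw [← hw]
      exact hml₁ (G.hist p n) [] v ▸ rfl
    · simp [hex] at hw
  have hwin0 := hw₀ p hplay₀
  have hwin1 := hw₁ p hplay₁
  by_cases hall : ∀ n, (p n).isSome
  · have e0 := hwin0.2 hall
    have e1 := hwin1.2 hall
    have hEv := e0.2 rfl
    have := e1.1 hEv
    simp at this
  · push_neg at hall
    obtain ⟨n, hn⟩ := hall
    have hne : p n = none := Option.not_isSome_iff_eq_none.1 hn
    have hfind : ∃ n, p n = none := ⟨n, hne⟩
    set k := Nat.find hfind with hk
    have hkn : p k = none := Nat.find_spec hfind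
    have hk0 : k ≠ 0 := by
      intro h
      rw [h, h0] at hkn
      cases hkn
    obtain ⟨j, hj⟩ : ∃ j, k = j + 1 := ⟨k - 1, by omega⟩
    have hjlt : j < k := by omega
    have hjne : ¬ p j = none := Nat.find_min hfind hjlt
    obtain ⟨v, hv⟩ := Option.ne_none_iff_exists'.1 hjne
    have hknone : p (j + 1) = none := by rw [← hj]; exact hkn
    have c0 := hwin0.1 j v hv hknone
    have c1 := hwin1.1 j v hv hknone
    cases h : G.owner v
    · exact c0 h
    · exact c1 h

end BothWin

section Main

theorem main_exists (G : ParityGame) [Nonempty G.V] (hfin : (Set.range G.ω).Finite)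
    (C : List ℕ) (hC : C.Pairwise (· < ·)) (hcov : ∀ v, G.ω v ∈ C) (ρb : Env G) :
    ∃ σ : G.Strategy false, σ.Memoryless ∧ ∀ y ∈ Wset G C ρb, G.WinningFrom false σ y :=
  pm_win G hfin C hC (Wset G C ρb) (sig G C ρb) (pm_exists G C ρb hC hcov)

end Main

end
end PDP


/-- positional determinacy of two-player turn-based parity games
(with finitely many priorities): from every state, exactly one of the two
players has a memoryless winning strategy. -/
theorem stmt13 (G : ParityGame) (hfin : (Set.range G.ω).Finite) (y : G.V) :
    Xor'
      (∃ σ : G.Strategy false, σ.Memoryless ∧ G.WinningFrom false σ y)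
      (∃ σ : G.Strategy true, σ.Memoryless ∧ G.WinningFrom true σ y) := by
  classical
  haveI : Nonempty G.V := ⟨y⟩
  set C : List ℕ := hfin.toFinset.sort (· ≤ ·) with hCdef
  have hC : C.Pairwise (· < ·) := (Finset.sortedLT_sort _).pairwise
  have hcov : ∀ v, G.ω v ∈ C := fun v =>
    (Finset.mem_sort _).2 (hfin.mem_toFinset.2 ⟨v, rfl⟩)
  set ρb : PDP.Env G := fun _ => (∅ : Set G.V) with hρb
  haveI : Nonempty (PDP.dualPG G).V := ⟨y⟩
  have hfin' : (Set.range (PDP.dualPG G).ω).Finite := by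
    have hr : Set.range (PDP.dualPG G).ω = (fun c => c + 1) '' Set.range G.ω := by
      ext c
      constructor
      · rintro ⟨v, rfl⟩
        exact ⟨G.ω v, ⟨v, rfl⟩, rfl⟩
      · rintro ⟨c', ⟨v, rfl⟩, rfl⟩
        exact ⟨v, rfl⟩
    rw [hr]
    exact hfin.image _
  have hC' : (C.map (· + 1)).Pairwise (· < ·) :=
    List.pairwise_map.2 (hC.imp fun h => Nat.succ_lt_succ h)
  have hcov' : ∀ v : (PDP.dualPG G).V, (PDP.dualPG G).ω v ∈ C.map (· + 1) := fun v =>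
    List.mem_map.2 ⟨G.ω v, hcov v, rfl⟩
  have hdual : (PDP.Wset G C ρb)ᶜ
      = PDP.Wset (PDP.dualPG G) (C.map (· + 1)) (fun q => (ρb (q - 1))ᶜ) :=
    PDP.solve_dual G C ρb
  obtain ⟨σ0, hml0, hwin0⟩ := PDP.main_exists G hfin C hC hcov ρb
  obtain ⟨σ1', hml1', hwin1'⟩ :=
    PDP.main_exists (PDP.dualPG G) hfin' (C.map (· + 1)) hC' hcov' (fun q => (ρb (q - 1))ᶜ)
  by_cases hy : y ∈ PDP.Wset G C ρb
  · left
    refine ⟨⟨σ0, hml0, hwin0 y hy⟩, ?_⟩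
    rintro ⟨σ1, hml1, hw1⟩
    exact PDP.not_both G y σ0 hml0 (hwin0 y hy) σ1 hml1 hw1
  · right
    have hy' : y ∈ PDP.Wset (PDP.dualPG G) (C.map (· + 1)) (fun q => (ρb (q - 1))ᶜ) := by
      rw [← hdual]
      exact hy
    obtain ⟨σ1, hml1, hw1⟩ := PDP.transfer_win G hfin σ1' hml1' y (hwin1' y hy')
    refine ⟨⟨σ1, hml1, hw1⟩, ?_⟩
    rintro ⟨σ0', hml0', hw0'⟩
    exact PDP.not_both G y σ0' hml0' hw0' σ1 hml1 hw1
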